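/- Let R be a commutative ring in which 2 is invertible, let u ∈ R be a unit, and let ι(u) ∈ O_R(q ⊥ h^m) be the matrix acting as the identity on all coordinates except x_m ↦ u·x_m and f_m ↦ u⁻¹·f_m. Then for all m×n matrices α, β over R one has ι(u) E_α ι(u)⁻¹ = E_{α'} and ι(u) E*_β ι(u)⁻¹ = E*_{β'}, where α' is α with its m-th row multiplied by u and β' is β with its m-th row multiplied by u⁻¹; in particular the subgroup { ι(u) : u ∈ R a unit } normalizes EO_R(q, h^m). -/

import Mathlib

/-!
STATEMENT 7: Let R be a commutative ring in which 2 is invertible, u ∈ R a unit, and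
ι(u) ∈ O_R(q ⊥ h^m) the matrix acting as the identity on all coordinates except
x_m ↦ u·x_m and f_m ↦ u⁻¹·f_m.  Then ι(u) E_α ι(u)⁻¹ = E_{α'} and ι(u) E*_β ι(u)⁻¹ = E*_{β'}
where α' (resp. β') is α (resp. β) with its m-th row multiplied by u (resp. u⁻¹); in
particular { ι(u) : u a unit } normalizes EO_R(q, h^m).
-/

namespace DSERMat

open Matrix

variable {R : Type*} [CommRing R] [Invertible (2 : R)]

/-- Index type for `Q ⊥ h^m`: the `z`-block, then the `x`-block, then the `f`-block. -/
abbrev Ind (n m : ℕ) := Fin n ⊕ (Fin m ⊕ Fin m)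

variable {n m : ℕ}

/-- The Gram matrix `Φ = diag(φ, [[0, I_m],[I_m, 0]])` of `q ⊥ h^m`. -/
def Phi (φ : Matrix (Fin n) (Fin n) R) (m : ℕ) : Matrix (Ind n m) (Ind n m) R :=
  fromBlocks φ 0 0 (fromBlocks 0 1 1 0)

/-- The elementary matrix `E_α = [[I_n, 0, −α*],[α, I_m, −(1/2)αα*],[0, 0, I_m]]`,
where `α* = φ⁻¹αᵀ`. -/
def Emat (φ : Matrix (Fin n) (Fin n) R) [Invertible φ] (α : Matrix (Fin m) (Fin n) R) :
    Matrix (Ind n m) (Ind n m) R :=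
  fromBlocks 1 (fromCols 0 (-(⅟φ * αᵀ))) (fromRows α 0)
    (fromBlocks 1 (-((⅟(2:R)) • (α * (⅟φ * αᵀ)))) 0 1)

/-- The elementary matrix `E*_β = [[I_n, −β*, 0],[0, I_m, 0],[β, −(1/2)ββ*, I_m]]`,
where `β* = φ⁻¹βᵀ`. -/
def EmatStar (φ : Matrix (Fin n) (Fin n) R) [Invertible φ] (β : Matrix (Fin m) (Fin n) R) :
    Matrix (Ind n m) (Ind n m) R :=
  fromBlocks 1 (fromCols (-(⅟φ * βᵀ)) 0) (fromRows 0 β)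
    (fromBlocks 1 0 (-((⅟(2:R)) • (β * (⅟φ * βᵀ)))) 1)

/-- The orthogonal group `O_R(q ⊥ h^m)` of the form `Φ`, as a subgroup of the units of the
matrix ring. -/
def OGrp (φ : Matrix (Fin n) (Fin n) R) (m : ℕ) : Subgroup (Matrix (Ind n m) (Ind n m) R)ˣ where
  carrier := {g | (g : Matrix (Ind n m) (Ind n m) R)ᵀ * Phi φ m * g = Phi φ m}
  one_mem' := by simp
  mul_mem' := fun {a b} ha hb => by
    show ((↑(a * b) : Matrix (Ind n m) (Ind n m) R))ᵀ * Phi φ m * (↑(a * b) : Matrix _ _ R)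
        = Phi φ m
    rw [Units.val_mul, transpose_mul]
    calc (b : Matrix (Ind n m) (Ind n m) R)ᵀ * (a : Matrix _ _ R)ᵀ * Phi φ m *
          ((a : Matrix _ _ R) * (b : Matrix _ _ R))
        = (b : Matrix (Ind n m) (Ind n m) R)ᵀ *
            ((a : Matrix _ _ R)ᵀ * Phi φ m * (a : Matrix _ _ R)) * (b : Matrix _ _ R) := by
          simp only [mul_assoc]
      _ = Phi φ m := by rw [ha, hb]
  inv_mem' := fun {a} ha => by
    show ((↑a⁻¹ : Matrix (Ind n m) (Ind n m) R))ᵀ * Phi φ m * (↑a⁻¹ : Matrix _ _ R) = Phi φ m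
    conv_lhs => rw [← ha]
    calc (↑a⁻¹ : Matrix (Ind n m) (Ind n m) R)ᵀ *
          ((a : Matrix _ _ R)ᵀ * Phi φ m * (a : Matrix _ _ R)) * (↑a⁻¹ : Matrix _ _ R)
        = ((a : Matrix (Ind n m) (Ind n m) R) * (↑a⁻¹ : Matrix _ _ R))ᵀ * Phi φ m *
            ((a : Matrix _ _ R) * (↑a⁻¹ : Matrix _ _ R)) := by
          rw [transpose_mul]; simp only [mul_assoc]
      _ = Phi φ m := by
          rw [← Units.val_mul, mul_inv_cancel]; simp

/-- The set of elementary generators `E_α`, `E*_β` inside the unit group. -/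
def ElemSet (φ : Matrix (Fin n) (Fin n) R) [Invertible φ] (m : ℕ) :
    Set (Matrix (Ind n m) (Ind n m) R)ˣ :=
  {g | ∃ α : Matrix (Fin m) (Fin n) R,
    (g : Matrix (Ind n m) (Ind n m) R) = Emat φ α ∨
    (g : Matrix (Ind n m) (Ind n m) R) = EmatStar φ α}

/-- The DSER elementary orthogonal group `EO_R(q, h^m)`. -/
def EOGrp (φ : Matrix (Fin n) (Fin n) R) [Invertible φ] (m : ℕ) :
    Subgroup (Matrix (Ind n m) (Ind n m) R)ˣ :=
  Subgroup.closure (ElemSet φ m)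

/-- The matrix of an automorphism of a smaller block of coordinates, embedded (via the
coordinate injection `u`) as an automorphism of everything, acting as the identity on the
remaining coordinates. -/
def embMat {J : Type*} [Fintype J] [DecidableEq J] {I : Type*} [Fintype I] [DecidableEq I]
    (u : J → I) (A : Matrix J J R) : Matrix I I R :=
  (fun i j => ∑ a : J, ∑ b : J, if i = u a ∧ j = u b then A a b else 0) +
    fun i j => if i = j ∧ ¬(∃ a : J, u a = i) then 1 else 0

end DSERMat

namespace DSERMat

variable {R : Type*} [CommRing R]

/-- The diagonal of the matrix ι(u): identity everywhere except `u` at the coordinate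
`x_m` and `u⁻¹` at the coordinate `f_m`. -/
def iotaDiag (n m : ℕ) (u : Rˣ) : Ind n m → R :=
  Sum.elim (fun _ => 1)
    (Sum.elim (fun j => if (j : ℕ) = m - 1 then (u : R) else 1)
              (fun j => if (j : ℕ) = m - 1 then ((u⁻¹ : Rˣ) : R) else 1))

/-- The matrix obtained from `α` by multiplying its m-th (i.e. last) row by `c`. -/
def lastRowScale {n m : ℕ} (c : R) (α : Matrix (Fin m) (Fin n) R) : Matrix (Fin m) (Fin n) R :=
  fun i j => (if (i : ℕ) = m - 1 then c else 1) * α i j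

end DSERMat


namespace DSERConjAux

open Matrix DSERMat

variable {R : Type*} [CommRing R] {n m : ℕ}

/-- auxiliary diagonal scaling vector -/
def sD (m : ℕ) (c : R) : Fin m → R := fun j => if (j : ℕ) = m - 1 then c else 1

lemma lastRowScale_eq_diag (c : R) (α : Matrix (Fin m) (Fin n) R) :
    lastRowScale c α = diagonal (sD m c) * α := by
  ext i j
  rw [diagonal_mul]
  rfl

lemma sD_mul_sD (c c' : R) (h : c * c' = 1) :
    (diagonal (sD m c) : Matrix (Fin m) (Fin m) R) * diagonal (sD m c') = 1 := by
  rw [diagonal_mul_diagonal]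
  have : (fun i : Fin m => sD m c i * sD m c' i) = fun _ => (1 : R) := by
    funext j
    by_cases hj : (j : ℕ) = m - 1 <;> simp [sD, hj, h]
  rw [this, diagonal_one]

lemma diag_iota (n m : ℕ) (u : Rˣ) :
    (diagonal (iotaDiag n m u) : Matrix (Ind n m) (Ind n m) R) =
      fromBlocks 1 0 0
        (fromBlocks (diagonal (sD m (u : R))) 0 0 (diagonal (sD m ((u⁻¹ : Rˣ) : R)))) := by
  rw [show (1 : Matrix (Fin n) (Fin n) R) = diagonal (fun _ => 1) from (diagonal_one).symm,
    fromBlocks_diagonal, fromBlocks_diagonal]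
  rfl

lemma conj_Emat_aux (φ : Matrix (Fin n) (Fin n) R) [Invertible (2 : R)] [Invertible φ]
    (c c' : R) (h : c * c' = 1) (α : Matrix (Fin m) (Fin n) R) :
    fromBlocks (1 : Matrix (Fin n) (Fin n) R) 0 0
        (fromBlocks (diagonal (sD m c)) 0 0 (diagonal (sD m c'))) * Emat φ α *
      fromBlocks 1 0 0 (fromBlocks (diagonal (sD m c')) 0 0 (diagonal (sD m c))) =
      Emat φ (diagonal (sD m c) * α) := by
  have h' : c' * c = 1 := by rw [mul_comm]; exact h
  rw [Emat, Emat]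
  simp only [fromBlocks_multiply, fromCols_mul_fromBlocks, fromBlocks_mul_fromRows,
    Matrix.mul_one, Matrix.one_mul, Matrix.zero_mul, Matrix.mul_zero, add_zero, zero_add,
    sD_mul_sD c c' h, sD_mul_sD c' c h', transpose_mul, diagonal_transpose,
    Matrix.neg_mul, Matrix.mul_neg, Matrix.smul_mul, Matrix.mul_smul, Matrix.mul_assoc]
  simp [sD_mul_sD c' c h']

lemma conj_EmatStar_aux (φ : Matrix (Fin n) (Fin n) R) [Invertible (2 : R)] [Invertible φ]
    (c c' : R) (h : c * c' = 1) (β : Matrix (Fin m) (Fin n) R) :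
    fromBlocks (1 : Matrix (Fin n) (Fin n) R) 0 0
        (fromBlocks (diagonal (sD m c)) 0 0 (diagonal (sD m c'))) * EmatStar φ β *
      fromBlocks 1 0 0 (fromBlocks (diagonal (sD m c')) 0 0 (diagonal (sD m c))) =
      EmatStar φ (diagonal (sD m c') * β) := by
  have h' : c' * c = 1 := by rw [mul_comm]; exact h
  rw [EmatStar, EmatStar]
  simp only [fromBlocks_multiply, fromCols_mul_fromBlocks, fromBlocks_mul_fromRows,
    Matrix.mul_one, Matrix.one_mul, Matrix.zero_mul, Matrix.mul_zero, add_zero, zero_add,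
    sD_mul_sD c c' h, sD_mul_sD c' c h', transpose_mul, diagonal_transpose,
    Matrix.neg_mul, Matrix.mul_neg, Matrix.smul_mul, Matrix.mul_smul, Matrix.mul_assoc]
  simp [sD_mul_sD c' c h', sD_mul_sD c c' h]

end DSERConjAux

open DSERMat Matrix in
/-- Conjugation by ι(u) on the elementary generators, and the normalization
of `EO_R(q, h^m)` by the units ι(u). -/
theorem dser_iota_conj
    (R : Type*) [CommRing R] [Invertible (2 : R)]
    (n : ℕ) (hn : 1 ≤ n) (m : ℕ) (hm : 1 ≤ m)
    (φ : Matrix (Fin n) (Fin n) R) [Invertible φ] (hφ : φ.IsSymm)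
    (u : Rˣ) :
    (∀ α : Matrix (Fin m) (Fin n) R,
      diagonal (iotaDiag n m u) * Emat φ α * diagonal (iotaDiag n m u⁻¹) =
        Emat φ (lastRowScale (u : R) α)) ∧
    (∀ β : Matrix (Fin m) (Fin n) R,
      diagonal (iotaDiag n m u) * EmatStar φ β * diagonal (iotaDiag n m u⁻¹) =
        EmatStar φ (lastRowScale ((u⁻¹ : Rˣ) : R) β)) ∧
    (∀ G : (Matrix (Ind n m) (Ind n m) R)ˣ,
      (G : Matrix (Ind n m) (Ind n m) R) = diagonal (iotaDiag n m u) →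
      ∀ x ∈ EOGrp φ m, G * x * G⁻¹ ∈ EOGrp φ m) := by
  have hu : (u : R) * ((u⁻¹ : Rˣ) : R) = 1 := by
    rw [← Units.val_mul, mul_inv_cancel, Units.val_one]
  have hE : ∀ α : Matrix (Fin m) (Fin n) R,
      diagonal (iotaDiag n m u) * Emat φ α * diagonal (iotaDiag n m u⁻¹) =
        Emat φ (lastRowScale (u : R) α) := by
    intro α
    rw [DSERConjAux.diag_iota, DSERConjAux.diag_iota, DSERConjAux.lastRowScale_eq_diag,
      inv_inv]
    exact DSERConjAux.conj_Emat_aux φ (u : R) ((u⁻¹ : Rˣ) : R) hu α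
  have hS : ∀ β : Matrix (Fin m) (Fin n) R,
      diagonal (iotaDiag n m u) * EmatStar φ β * diagonal (iotaDiag n m u⁻¹) =
        EmatStar φ (lastRowScale ((u⁻¹ : Rˣ) : R) β) := by
    intro β
    rw [DSERConjAux.diag_iota, DSERConjAux.diag_iota, DSERConjAux.lastRowScale_eq_diag,
      inv_inv]
    exact DSERConjAux.conj_EmatStar_aux φ (u : R) ((u⁻¹ : Rˣ) : R) hu β
  refine ⟨hE, hS, ?_⟩
  intro G hG x hx
  have hmul : (G : Matrix (Ind n m) (Ind n m) R) * diagonal (iotaDiag n m u⁻¹) = 1 := by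
    rw [hG, diagonal_mul_diagonal]
    have : (fun i => iotaDiag n m u i * iotaDiag n m u⁻¹ i) = fun _ => (1 : R) := by
      funext i
      rcases i with z | x | f <;>
        simp only [iotaDiag, Sum.elim_inl, Sum.elim_inr, inv_inv] <;>
        (try split_ifs) <;>
        simp [hu, mul_comm]
    rw [this, diagonal_one]
  have hGinv : (↑G⁻¹ : Matrix (Ind n m) (Ind n m) R) = diagonal (iotaDiag n m u⁻¹) := by
    calc (↑G⁻¹ : Matrix (Ind n m) (Ind n m) R)
        = ↑G⁻¹ * ((G : Matrix (Ind n m) (Ind n m) R) * diagonal (iotaDiag n m u⁻¹)) := by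
          rw [hmul, mul_one]
      _ = (↑(G⁻¹ * G) : Matrix (Ind n m) (Ind n m) R) * diagonal (iotaDiag n m u⁻¹) := by
          rw [Units.val_mul, mul_assoc]
      _ = diagonal (iotaDiag n m u⁻¹) := by rw [inv_mul_cancel, Units.val_one, one_mul]
  induction hx using Subgroup.closure_induction with
  | mem g hg =>
      apply Subgroup.subset_closure
      obtain ⟨α, hα | hα⟩ := hg
      · exact ⟨lastRowScale (u : R) α, Or.inl (by
          rw [Units.val_mul, Units.val_mul, hα, hG, hGinv]; exact hE α)⟩
      · exact ⟨lastRowScale ((u⁻¹ : Rˣ) : R) α, Or.inr (by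
          rw [Units.val_mul, Units.val_mul, hα, hG, hGinv]; exact hS α)⟩
  | one => simpa using (EOGrp φ m).one_mem
  | mul a b ha hb iha ihb =>
      have : G * (a * b) * G⁻¹ = (G * a * G⁻¹) * (G * b * G⁻¹) := by group
      rw [this]; exact mul_mem iha ihb
  | inv a ha iha =>
      have : G * a⁻¹ * G⁻¹ = (G * a * G⁻¹)⁻¹ := by group
      rw [this]; exact inv_mem iha
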